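/- Let X be a real random variable with bounded support, so that −∞ < l < r < ∞. Then for every θ ∈ (0, 1), G_X(θ, 1 − θ) ≤ (r − E[X])^θ · (E[X] − l)^{1−θ}. -/

import Mathlib

open MeasureTheory ProbabilityTheory Set
open scoped ENNReal

/-- The (essential) support interval of a CDF `F`: the set where `0 < F x < 1`,
which coincides (up to endpoints) with the interval `(l, r)` where
`l = inf {x : F x > 0}` and `r = sup {x : 1 - F x > 0}`. -/
def cigfSupport (F : ℝ → ℝ) : Set ℝ := {x | 0 < F x ∧ F x < 1}

/-- The cumulative information generating function
`G_X(α, β) = ∫_l^r F(x)^α (1 - F(x))^β dx`. -/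
noncomputable def cigf (F : ℝ → ℝ) (α β : ℝ) : ℝ :=
  ∫ x in cigfSupport F, F x ^ α * (1 - F x) ^ β

/-- `(α, β) ∈ D_X`, i.e. `G_X(α, β) < ∞`. -/
def memD (F : ℝ → ℝ) (α β : ℝ) : Prop :=
  IntegrableOn (fun x => F x ^ α * (1 - F x) ^ β) (cigfSupport F)

/-- The CDF of a random variable `X` under the probability measure `P`. -/
noncomputable def rvCDF {Ω : Type*} [MeasurableSpace Ω] (P : Measure Ω) (X : Ω → ℝ) (x : ℝ) : ℝ :=
  (P {ω | X ω ≤ x}).toReal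

/-- The CDF of a probability measure on `ℝ`. -/
noncomputable def cdfOf (μ : Measure ℝ) (x : ℝ) : ℝ := (μ (Iic x)).toReal

lemma cdfOf_mono (μ : Measure ℝ) [IsProbabilityMeasure μ] : Monotone (cdfOf μ) :=
  fun _ _ hab => ENNReal.toReal_mono (measure_ne_top _ _) (measure_mono (Iic_subset_Iic.mpr hab))

lemma cdfOf_nonneg (μ : Measure ℝ) (x : ℝ) : 0 ≤ cdfOf μ x := ENNReal.toReal_nonneg

lemma cdfOf_le_one (μ : Measure ℝ) [IsProbabilityMeasure μ] (x : ℝ) : cdfOf μ x ≤ 1 := by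
  unfold cdfOf
  rw [← ENNReal.toReal_one]
  exact ENNReal.toReal_mono (by simp) prob_le_one

lemma ofReal_cdfOf (μ : Measure ℝ) [IsProbabilityMeasure μ] (x : ℝ) :
    ENNReal.ofReal (cdfOf μ x) = μ (Iic x) :=
  ENNReal.ofReal_toReal (measure_ne_top _ _)

lemma measure_Iio_glb (μ : Measure ℝ) [IsProbabilityMeasure μ] {l : ℝ}
    (hl : IsGLB {x | 0 < cdfOf μ x} l) : μ (Iio l) = 0 := by
  have hzero : ∀ x, x < l → μ (Iic x) = 0 := by
    intro x hx
    have h1 : ¬ (0 < cdfOf μ x) := fun h => absurd (hl.1 h) (not_le.mpr hx)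
    have h2 : cdfOf μ x = 0 := le_antisymm (not_lt.mp h1) (cdfOf_nonneg μ x)
    rw [← ofReal_cdfOf, h2, ENNReal.ofReal_zero]
  refine measure_mono_null (t := ⋃ n : ℕ, Iic (l - ((n : ℝ) + 1)⁻¹)) ?_ ?_
  · intro y hy
    obtain ⟨n, hn⟩ := exists_nat_one_div_lt (K := ℝ) (sub_pos.mpr hy)
    refine mem_iUnion.mpr ⟨n, ?_⟩
    simp only [mem_Iic]
    rw [one_div] at hn
    linarith
  · refine measure_iUnion_null fun n => hzero _ ?_
    have : (0:ℝ) < ((n:ℝ)+1)⁻¹ := by positivity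
    linarith

lemma measure_Ioi_lub (μ : Measure ℝ) [IsProbabilityMeasure μ] {r : ℝ}
    (hr : IsLUB {x | cdfOf μ x < 1} r) : μ (Ioi r) = 0 := by
  have hzero : ∀ x, r < x → μ (Ioi x) = 0 := by
    intro x hx
    have h1 : ¬ (cdfOf μ x < 1) := fun h => absurd (hr.1 h) (not_le.mpr hx)
    have h2 : cdfOf μ x = 1 := le_antisymm (cdfOf_le_one μ x) (not_lt.mp h1)
    have h3 : μ (Iic x) = 1 := by rw [← ofReal_cdfOf, h2, ENNReal.ofReal_one]
    have := measure_compl (measurableSet_Iic (a := x)) (measure_ne_top μ _)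
    rw [compl_Iic, h3, measure_univ] at this
    simp [this]
  refine measure_mono_null (t := ⋃ n : ℕ, Ioi (r + ((n : ℝ) + 1)⁻¹)) ?_ ?_
  · intro y hy
    obtain ⟨n, hn⟩ := exists_nat_one_div_lt (K := ℝ) (sub_pos.mpr hy)
    refine mem_iUnion.mpr ⟨n, ?_⟩
    rw [one_div] at hn
    simp only [mem_Ioi]
    linarith
  · refine measure_iUnion_null fun n => hzero _ ?_
    have : (0:ℝ) < ((n:ℝ)+1)⁻¹ := by positivity
    linarith

lemma integral_cdfOf_Ioo (μ : Measure ℝ) [IsProbabilityMeasure μ] {l r : ℝ}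
    (h0 : μ (Iio l) = 0) (h1 : μ (Ioi r) = 0) :
    ∫ x in Ioo l r, cdfOf μ x = r - ∫ x, x ∂μ := by
  have hmem : ∀ᵐ y ∂μ, y ∈ Icc l r := by
    rw [ae_iff]
    refine measure_mono_null (fun y hy => ?_) ((measure_union_null_iff).mpr ⟨h0, h1⟩)
    simp only [mem_Icc, not_and_or, not_le, mem_setOf_eq] at hy
    rcases hy with h | h
    · exact Or.inl h
    · exact Or.inr h
  have hint : Integrable (fun x : ℝ => x) μ := by
    refine (integrable_const (max |l| |r|)).mono' measurable_id.aestronglyMeasurable ?_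
    filter_upwards [hmem] with y hy
    exact abs_le_max_abs_abs hy.1 hy.2
  have hEler : ∫ x, x ∂μ ≤ r := by
    calc ∫ x, x ∂μ ≤ ∫ _, r ∂μ := by
          refine integral_mono_ae hint (integrable_const r) ?_
          filter_upwards [hmem] with y hy using hy.2
      _ = r := by simp
  have hmeasU : Measurable (Function.uncurry fun (x y : ℝ) => (Iic x).indicator (1 : ℝ → ℝ≥0∞) y) := by
    have : (Function.uncurry fun (x y : ℝ) => (Iic x).indicator (1 : ℝ → ℝ≥0∞) y)
        = {p : ℝ × ℝ | p.2 ≤ p.1}.indicator (1 : ℝ × ℝ → ℝ≥0∞) := by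
      ext p
      simp [Function.uncurry, Set.indicator_apply, Set.mem_setOf_eq]
    rw [this]
    exact measurable_const.indicator (measurableSet_le measurable_snd measurable_fst)
  have key : ∫⁻ x in Ioo l r, ENNReal.ofReal (cdfOf μ x) = ENNReal.ofReal (r - ∫ x, x ∂μ) := by
    calc ∫⁻ x in Ioo l r, ENNReal.ofReal (cdfOf μ x)
        = ∫⁻ x in Ioo l r, ∫⁻ y, (Iic x).indicator (1 : ℝ → ℝ≥0∞) y ∂μ := by
          refine lintegral_congr fun x => ?_
          rw [ofReal_cdfOf, ← lintegral_indicator_one measurableSet_Iic]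
      _ = ∫⁻ y, ∫⁻ x in Ioo l r, (Iic x).indicator (1 : ℝ → ℝ≥0∞) y ∂volume ∂μ := by
          exact lintegral_lintegral_swap hmeasU.aemeasurable
      _ = ∫⁻ y, volume (Ici y ∩ Ioo l r) ∂μ := by
          refine lintegral_congr fun y => ?_
          have : ∀ x, (Iic x).indicator (1 : ℝ → ℝ≥0∞) y = (Ici y).indicator (1 : ℝ → ℝ≥0∞) x := by
            intro x
            simp [Set.indicator_apply, mem_Iic, mem_Ici]
          simp_rw [this]
          rw [lintegral_indicator_one measurableSet_Ici, Measure.restrict_apply measurableSet_Ici]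
      _ = ∫⁻ y, ENNReal.ofReal (r - y) ∂μ := by
          refine lintegral_congr_ae ?_
          filter_upwards [hmem] with y hy
          rcases eq_or_lt_of_le hy.1 with h | h
          · have hsub : Ioo l r ⊆ Ici y := fun x hx => le_of_lt (h ▸ hx.1)
            rw [inter_eq_self_of_subset_right hsub, Real.volume_Ioo, ← h]
          · have heq : Ici y ∩ Ioo l r = Ico y r := by
              ext x
              constructor
              · rintro ⟨ha, _, hc⟩; exact ⟨ha, hc⟩
              · rintro ⟨ha, hb⟩; exact ⟨ha, lt_of_lt_of_le h ha, hb⟩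
            rw [heq, Real.volume_Ico]
      _ = ENNReal.ofReal (∫ y, (r - y) ∂μ) := by
          have hsint : Integrable (fun y : ℝ => r - y) μ := (integrable_const r).sub hint
          rw [ofReal_integral_eq_lintegral_ofReal hsint ?_]
          filter_upwards [hmem] with y hy
          simp [sub_nonneg, hy.2]
      _ = ENNReal.ofReal (r - ∫ x, x ∂μ) := by
          rw [integral_sub (integrable_const r) hint]
          simp
  rw [integral_eq_lintegral_of_nonneg_ae (f := fun x => cdfOf μ x)
      (ae_of_all _ fun x => ENNReal.toReal_nonneg)
      ((cdfOf_mono μ).measurable.aestronglyMeasurable), key,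
      ENNReal.toReal_ofReal (by linarith)]

/-- Hölder-type bound: for a random variable with bounded support `(l, r)`
and `θ ∈ (0,1)`, `G_X(θ, 1-θ) ≤ (r - E[X])^θ (E[X] - l)^(1-θ)`. -/
theorem stmt11 (μ : Measure ℝ) [IsProbabilityMeasure μ]
    (l r : ℝ) (hlr : l < r)
    (hl : IsGLB {x | 0 < cdfOf μ x} l) (hr : IsLUB {x | cdfOf μ x < 1} r)
    (θ : ℝ) (hθ : θ ∈ Ioo (0:ℝ) 1) :
    ∫ x in Ioo l r, cdfOf μ x ^ θ * (1 - cdfOf μ x) ^ (1 - θ) ≤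
      (r - ∫ x, x ∂μ) ^ θ * ((∫ x, x ∂μ) - l) ^ (1 - θ) := by
  obtain ⟨hθ0, hθ1⟩ := hθ
  set F : ℝ → ℝ := cdfOf μ with hF
  have hmF : Measurable F := (cdfOf_mono μ).measurable
  have hconst1 : IntegrableOn (fun _ : ℝ => (1:ℝ)) (Ioo l r) volume :=
    integrableOn_const (by simp)
  have hFint : IntegrableOn F (Ioo l r) volume := by
    refine hconst1.mono' hmF.aestronglyMeasurable ?_
    exact ae_of_all _ fun x => by
      rw [Real.norm_eq_abs, abs_of_nonneg (cdfOf_nonneg μ x)]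
      exact cdfOf_le_one μ x
  have h1Fint : IntegrableOn (fun x => 1 - F x) (Ioo l r) volume :=
    hconst1.sub hFint
  set A : ℝ := ∫ x in Ioo l r, F x with hAdef
  set B : ℝ := ∫ x in Ioo l r, (1 - F x) with hBdef
  have hA : A = r - ∫ x, x ∂μ :=
    integral_cdfOf_Ioo μ (measure_Iio_glb μ hl) (measure_Ioi_lub μ hr)
  have hB : B = (∫ x, x ∂μ) - l := by
    have : B = (r - l) - A := by
      rw [hBdef, integral_sub hconst1 hFint]
      simp [Real.volume_Ioo, ENNReal.toReal_ofReal (le_of_lt (sub_pos.mpr hlr)), max_eq_left (sub_nonneg.mpr hlr.le), hAdef]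
    rw [this, hA]; ring
  -- positivity of F and 1 - F on (l, r)
  have hFpos : ∀ x ∈ Ioo l r, 0 < F x := by
    intro x hx
    by_contra h
    have hx0 : F x = 0 := le_antisymm (not_lt.mp h) (cdfOf_nonneg μ x)
    have : x ∈ lowerBounds {y | 0 < cdfOf μ y} := by
      intro s hs
      by_contra hsx
      have := cdfOf_mono μ (le_of_lt (not_le.mp hsx))
      rw [← hF] at this
      rw [hx0] at this
      exact absurd (lt_of_lt_of_le hs this) (lt_irrefl 0)
    exact absurd (hl.2 this) (not_le.mpr hx.1)
  have hFlt1 : ∀ x ∈ Ioo l r, F x < 1 := by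
    intro x hx
    by_contra h
    have hx1 : F x = 1 := le_antisymm (cdfOf_le_one μ x) (not_lt.mp h)
    have : x ∈ upperBounds {y | cdfOf μ y < 1} := by
      intro s hs
      by_contra hsx
      have := cdfOf_mono μ (le_of_lt (not_le.mp hsx))
      rw [← hF] at this
      rw [hx1] at this
      exact absurd (lt_of_le_of_lt this hs) (lt_irrefl 1)
    exact absurd (hr.2 this) (not_le.mpr hx.2)
  have hApos : 0 < A := by
    rw [hAdef, setIntegral_pos_iff_support_of_nonneg_ae
      (ae_of_all _ fun x => cdfOf_nonneg μ x) hFint]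
    refine lt_of_lt_of_le ?_ (measure_mono (fun x hx => ⟨ne_of_gt (hFpos x hx), hx⟩))
    rw [Real.volume_Ioo]
    exact ENNReal.ofReal_pos.mpr (sub_pos.mpr hlr)
  have hBpos : 0 < B := by
    rw [hBdef, setIntegral_pos_iff_support_of_nonneg_ae ?_ h1Fint]
    · refine lt_of_lt_of_le ?_ (measure_mono (fun x hx =>
        ⟨ne_of_gt (sub_pos.mpr (hFlt1 x hx)), hx⟩))
      rw [Real.volume_Ioo]
      exact ENNReal.ofReal_pos.mpr (sub_pos.mpr hlr)
    · refine ae_restrict_of_ae (ae_of_all _ fun x => ?_)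
      have := cdfOf_le_one μ x
      rw [← hF] at this
      simp [sub_nonneg, this]
  -- pointwise Hölder via weighted AM-GM
  set C : ℝ := A ^ θ * B ^ (1 - θ) with hCdef
  have hCpos : 0 < C := by positivity
  have hpoint : ∀ x, F x ^ θ * (1 - F x) ^ (1 - θ) ≤
      C * (θ / A * F x + (1 - θ) / B * (1 - F x)) := by
    intro x
    have h0F : 0 ≤ F x := cdfOf_nonneg μ x
    have h1F : 0 ≤ 1 - F x := sub_nonneg.mpr (cdfOf_le_one μ x)
    have hgm := Real.geom_mean_le_arith_mean2_weighted (w₁ := θ) (w₂ := 1 - θ)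
      (p₁ := F x / A) (p₂ := (1 - F x) / B) (le_of_lt hθ0) (by linarith)
      (div_nonneg h0F (le_of_lt hApos)) (div_nonneg h1F (le_of_lt hBpos)) (by ring)
    have heq : F x ^ θ * (1 - F x) ^ (1 - θ)
        = C * ((F x / A) ^ θ * ((1 - F x) / B) ^ (1 - θ)) := by
      rw [hCdef, Real.div_rpow h0F (le_of_lt hApos), Real.div_rpow h1F (le_of_lt hBpos)]
      have hAne : A ^ θ ≠ 0 := ne_of_gt (Real.rpow_pos_of_pos hApos θ)
      have hBne : B ^ (1 - θ) ≠ 0 := ne_of_gt (Real.rpow_pos_of_pos hBpos (1 - θ))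
      field_simp
    rw [heq]
    calc C * ((F x / A) ^ θ * ((1 - F x) / B) ^ (1 - θ))
        ≤ C * (θ * (F x / A) + (1 - θ) * ((1 - F x) / B)) :=
          mul_le_mul_of_nonneg_left hgm (le_of_lt hCpos)
      _ = C * (θ / A * F x + (1 - θ) / B * (1 - F x)) := by ring
  -- integrate
  have hhint : IntegrableOn (fun x => C * (θ / A * F x + (1 - θ) / B * (1 - F x)))
      (Ioo l r) volume :=
    (((hFint.const_mul (θ / A)).add (h1Fint.const_mul ((1 - θ) / B))).const_mul C)
  have hgint : IntegrableOn (fun x => F x ^ θ * (1 - F x) ^ (1 - θ)) (Ioo l r) volume := by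
    refine hconst1.mono'
      (((hmF.pow measurable_const).mul
        ((measurable_const.sub hmF).pow measurable_const)).aestronglyMeasurable) ?_
    refine ae_of_all _ fun x => ?_
    have h0F : 0 ≤ F x := cdfOf_nonneg μ x
    have h1F : 0 ≤ 1 - F x := sub_nonneg.mpr (cdfOf_le_one μ x)
    rw [Real.norm_eq_abs, abs_of_nonneg (mul_nonneg (Real.rpow_nonneg h0F θ)
      (Real.rpow_nonneg h1F (1 - θ)))]
    calc F x ^ θ * (1 - F x) ^ (1 - θ)
        ≤ 1 * 1 := by
          refine mul_le_mul ?_ ?_ (Real.rpow_nonneg h1F _) zero_le_one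
          · exact Real.rpow_le_one h0F (cdfOf_le_one μ x) (le_of_lt hθ0)
          · exact Real.rpow_le_one h1F (by linarith [cdfOf_nonneg μ x]) (by linarith)
      _ = 1 := by ring
  have hmain : ∫ x in Ioo l r, F x ^ θ * (1 - F x) ^ (1 - θ) ≤
      ∫ x in Ioo l r, C * (θ / A * F x + (1 - θ) / B * (1 - F x)) := by
    refine setIntegral_mono_on hgint hhint measurableSet_Ioo fun x _ => hpoint x
  have hcomp : ∫ x in Ioo l r, C * (θ / A * F x + (1 - θ) / B * (1 - F x)) = C := by
    rw [integral_const_mul, integral_add (hFint.const_mul (θ / A)) (h1Fint.const_mul ((1 - θ) / B)),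
      integral_const_mul, integral_const_mul, ← hAdef, ← hBdef]
    field_simp
    ring
  rw [← hA, ← hB, ← hCdef]
  calc ∫ x in Ioo l r, F x ^ θ * (1 - F x) ^ (1 - θ)
      ≤ ∫ x in Ioo l r, C * (θ / A * F x + (1 - θ) / B * (1 - F x)) := hmain
    _ = C := hcomp
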